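/- arXiv:1701.06041 — 2 statements merged into one kernel-verified Lean document; each statement's English description precedes it below -/
import Mathlib

section
/- Define T(x, n) = (e^{−x}·n^4/x^4)·(2 − x/n)^3·(2 + (2n−1)·x/n + x²) for x > 0 and positive integers n, and set β_n = 4·log n − 2·log(log n). Then T(β_n, n) → 1/2 as n → ∞. -/
open Filter Real

/-- `T(x, n) = (e^{-x} n⁴ / x⁴) (2 - x/n)³ (2 + (2n-1)x/n + x²)`. -/
noncomputable def Tfn (x : ℝ) (n : ℕ) : ℝ :=
  Real.exp (-x) * (n : ℝ) ^ 4 / x ^ 4 * (2 - x / n) ^ 3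
    * (2 + (2 * n - 1) * x / n + x ^ 2)

/-- `β_n = 4 log n - 2 log (log n)`. -/
noncomputable def betaSeq (n : ℕ) : ℝ :=
  4 * Real.log n - 2 * Real.log (Real.log n)

/-- `T(β_n, n) → 1/2` as `n → ∞`. -/
theorem tendsto_T_beta :
    Filter.Tendsto (fun n : ℕ => Tfn (betaSeq n) n) Filter.atTop (nhds (1 / 2)) := by
  have hlog0 : Tendsto (fun x : ℝ => Real.log x / x) atTop (nhds 0) :=
    Real.isLittleO_log_id_atTop.tendsto_div_nhds_zero
  have hcast : Tendsto (fun n : ℕ => (n : ℝ)) atTop atTop := tendsto_natCast_atTop_atTop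
  have hL : Tendsto (fun n : ℕ => Real.log n) atTop atTop :=
    Real.tendsto_log_atTop.comp hcast
  -- eventually facts
  have hev : ∀ᶠ n : ℕ in atTop, 1 ≤ Real.log n ∧ 1 ≤ (n : ℝ) := by
    filter_upwards [hL.eventually_ge_atTop 1, hcast.eventually_ge_atTop 1] with n h1 h2
    exact ⟨h1, h2⟩
  have key : ∀ n : ℕ, 1 ≤ Real.log n → 1 ≤ (n : ℝ) →
      0 < Real.log n ∧ 2 * Real.log n ≤ betaSeq n ∧ betaSeq n ≤ 4 * Real.log n := by
    intro n h1 h2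
    have hLpos : (0:ℝ) < Real.log n := lt_of_lt_of_le one_pos h1
    have hll : Real.log (Real.log n) ≤ Real.log n - 1 := Real.log_le_sub_one_of_pos hLpos
    have hll0 : 0 ≤ Real.log (Real.log n) := Real.log_nonneg h1
    refine ⟨hLpos, ?_, ?_⟩ <;> unfold betaSeq <;> nlinarith
  -- β → ∞
  have hβ : Tendsto betaSeq atTop atTop := by
    have h2 : Tendsto (fun n : ℕ => 2 * Real.log n) atTop atTop :=
      hL.const_mul_atTop (by norm_num)
    apply tendsto_atTop_mono' _ _ h2
    filter_upwards [hev] with n hn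
    exact (key n hn.1 hn.2).2.1
  -- L/β → 1/4
  have hinner : Tendsto (fun n : ℕ => Real.log (Real.log n) / Real.log n) atTop (nhds 0) :=
    hlog0.comp hL
  have hden : Tendsto (fun n : ℕ => 4 - 2 * (Real.log (Real.log n) / Real.log n)) atTop
      (nhds 4) := by
    have := (tendsto_const_nhds (x := (4:ℝ)) (f := atTop)).sub (hinner.const_mul 2)
    simpa using this
  have hLβ : Tendsto (fun n : ℕ => Real.log n / betaSeq n) atTop (nhds (1/4)) := by
    have h := (tendsto_const_nhds (x := (1:ℝ)) (f := (atTop : Filter ℕ))).div hden (by norm_num)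
    apply Tendsto.congr' _ (by simpa using h)
    filter_upwards [hev] with n hn
    obtain ⟨hLpos, hβlb, _⟩ := key n hn.1 hn.2
    have hβpos : 0 < betaSeq n := lt_of_lt_of_le (by linarith) hβlb
    have hLne : Real.log n ≠ 0 := ne_of_gt hLpos
    have hd : 4 - 2 * (Real.log (Real.log n) / Real.log n) = betaSeq n / Real.log n := by
      unfold betaSeq; field_simp
    simp only [Pi.div_apply]
    rw [hd, one_div_div]
  -- β/n → 0
  have hLn : Tendsto (fun n : ℕ => Real.log n / (n:ℝ)) atTop (nhds 0) := hlog0.comp hcast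
  have hβn : Tendsto (fun n : ℕ => betaSeq n / (n:ℝ)) atTop (nhds 0) := by
    have h4 : Tendsto (fun n : ℕ => 4 * (Real.log n / (n:ℝ))) atTop (nhds 0) := by
      simpa using hLn.const_mul 4
    refine tendsto_of_tendsto_of_tendsto_of_le_of_le' tendsto_const_nhds h4 ?_ ?_
    · filter_upwards [hev] with n hn
      obtain ⟨hLpos, hβlb, _⟩ := key n hn.1 hn.2
      have hβpos : 0 < betaSeq n := lt_of_lt_of_le (by linarith) hβlb
      positivity
    · filter_upwards [hev] with n hn
      obtain ⟨hLpos, _, hβub⟩ := key n hn.1 hn.2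
      have hnpos : (0:ℝ) < n := lt_of_lt_of_le one_pos hn.2
      rw [← mul_div_assoc]
      gcongr
  have hβinv : Tendsto (fun n : ℕ => (betaSeq n)⁻¹) atTop (nhds 0) := hβ.inv_tendsto_atTop
  have hninv : Tendsto (fun n : ℕ => ((n:ℝ))⁻¹) atTop (nhds 0) :=
    tendsto_inv_atTop_zero.comp hcast
  -- the model function
  have hg : Tendsto (fun n : ℕ => (Real.log n / betaSeq n)^2 * (2 - betaSeq n/(n:ℝ))^3 *
      (2 * ((betaSeq n)⁻¹)^2 + (2 - ((n:ℝ))⁻¹) * (betaSeq n)⁻¹ + 1)) atTop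
      (nhds ((1/4:ℝ)^2 * (2 - 0)^3 * (2 * 0^2 + (2 - 0) * 0 + 1))) := by
    exact ((hLβ.pow 2).mul (((tendsto_const_nhds).sub hβn).pow 3)).mul
      ((((hβinv.pow 2).const_mul 2).add
        (((tendsto_const_nhds).sub hninv).mul hβinv)).add tendsto_const_nhds)
  have hval : ((1/4:ℝ)^2 * (2 - 0)^3 * (2 * 0^2 + (2 - 0) * 0 + 1)) = 1/2 := by norm_num
  rw [hval] at hg
  apply Tendsto.congr' _ hg
  filter_upwards [hev] with n hn
  obtain ⟨hLpos, hβlb, _⟩ := key n hn.1 hn.2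
  have hβpos : 0 < betaSeq n := lt_of_lt_of_le (by linarith) hβlb
  have hnpos : (0:ℝ) < n := lt_of_lt_of_le one_pos hn.2
  have hexp : Real.exp (-betaSeq n) = (Real.log n)^2 / (n:ℝ)^4 := by
    unfold betaSeq
    rw [show -(4 * Real.log n - 2 * Real.log (Real.log n)) =
        (Real.log (Real.log n) + Real.log (Real.log n)) +
        -((Real.log n + Real.log n) + (Real.log n + Real.log n)) by ring,
      Real.exp_add, Real.exp_add, Real.exp_neg, Real.exp_add, Real.exp_add,
      Real.exp_log hLpos, Real.exp_log hnpos]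
    field_simp
  unfold Tfn
  rw [hexp]
  field_simp
end

section
/- Define T(x, n) = (e^{−x}·n^4/x^4)·(2 − x/n)^3·(2 + (2n−1)·x/n + x²) for x > 0 and positive integers n, and set β_n = 4·log n − 2·log(log n). Then 0 < T(β_n, n) < 1 for every integer n ≥ 7. -/
/-- Key polynomial inequality. -/
lemma key_poly (L b : ℝ) (hL : 1.93 ≤ L) (hb : 3*L + 0.613 ≤ b) :
    8*L^2*(b^2+2*b+2) < b^4 := by
  nlinarith [sq_nonneg (b - 3*L - 0.613), sq_nonneg (b - 3*L), sq_nonneg L, sq_nonneg b,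
    mul_pos (show (0:ℝ) < L by linarith) (show (0:ℝ) < b by nlinarith),
    sq_nonneg (L - 1.93), sq_nonneg (b - 6.4), mul_nonneg (mul_nonneg (sub_nonneg.2 hL) (sub_nonneg.2 hL)) (sub_nonneg.2 hL)]

lemma exp193_le : Real.exp 1.93 ≤ 7 := by
  have h07 : (1.07:ℝ) ≤ Real.exp 0.07 := by
    have := Real.add_one_le_exp (0.07:ℝ); linarith
  have h2 : Real.exp 2 < 7.3891 := by
    have h := Real.exp_one_lt_d9
    have : Real.exp 2 = Real.exp 1 * Real.exp 1 := by
      rw [← Real.exp_add]; norm_num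
    nlinarith [Real.exp_pos 1]
  have hsplit : Real.exp 1.93 * Real.exp 0.07 = Real.exp 2 := by
    rw [← Real.exp_add]; norm_num
  nlinarith [Real.exp_pos (1.93:ℝ)]

lemma log_ge (n : ℕ) (hn : 7 ≤ n) : (1.93:ℝ) ≤ Real.log n := by
  have hn7 : (7:ℝ) ≤ (n:ℝ) := by exact_mod_cast hn
  have h7 : (1.93:ℝ) ≤ Real.log 7 := by
    rw [Real.le_log_iff_exp_le (by norm_num)]
    exact exp193_le
  calc (1.93:ℝ) ≤ Real.log 7 := h7
    _ ≤ Real.log n := Real.log_le_log (by norm_num) hn7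

/-- log n ≤ n/2 for n ≥ 1 (real x). -/
lemma log_le_half (x : ℝ) (hx : 1 ≤ x) : Real.log x ≤ x / 2 := by
  have hx0 : (0:ℝ) < x := by linarith
  have hs : Real.log (Real.sqrt x) ≤ Real.sqrt x - 1 :=
    Real.log_le_sub_one_of_pos (Real.sqrt_pos.2 hx0)
  have hls : Real.log (Real.sqrt x) = Real.log x / 2 := Real.log_sqrt hx0.le
  have hsq : Real.sqrt x ^ 2 = x := Real.sq_sqrt hx0.le
  nlinarith [Real.sqrt_nonneg x, sq_nonneg (Real.sqrt x - 2)]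

/-- `0 < T(β_n, n) < 1` for every integer `n ≥ 7`. -/
theorem T_beta_pos_lt_one (n : ℕ) (hn : 7 ≤ n) :
    0 < Tfn (betaSeq n) n ∧ Tfn (betaSeq n) n < 1 := by
  set L := Real.log n with hLdef
  set b := betaSeq n with hbdef
  have hn7 : (7:ℝ) ≤ (n:ℝ) := by exact_mod_cast hn
  have hn0 : (0:ℝ) < n := by linarith
  have hL : (1.93:ℝ) ≤ L := log_ge n hn
  have hL0 : (0:ℝ) < L := by linarith
  -- tangent bound on log L at 2
  have hlogL : Real.log L ≤ Real.log 2 + (L / 2 - 1) := by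
    have h := Real.log_le_sub_one_of_pos (show (0:ℝ) < L/2 by linarith)
    have : Real.log (L/2) = Real.log L - Real.log 2 := by
      rw [Real.log_div (by linarith) (by norm_num)]
    linarith
  have hlog2 : Real.log 2 < 0.6931471808 := Real.log_two_lt_d9
  have hb_lb : 3*L + 0.613 ≤ b := by
    have : b = 4*L - 2*Real.log L := by rw [hbdef, betaSeq]
    nlinarith
  have hb0 : (0:ℝ) < b := by linarith
  -- b/n < 2
  have hlogLpos : 0 < Real.log L := Real.log_pos (by linarith)
  have hLn : L ≤ (n:ℝ)/2 := log_le_half n (by linarith)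
  have hb2n : b < 2*(n:ℝ) := by
    have : b = 4*L - 2*Real.log L := by rw [hbdef, betaSeq]
    nlinarith
  have ht2 : b/(n:ℝ) < 2 := by rw [div_lt_iff₀ hn0]; linarith
  have ht0 : 0 < b/(n:ℝ) := div_pos hb0 hn0
  have hcube_pos : 0 < (2 - b/(n:ℝ))^3 := pow_pos (by linarith) 3
  have hcube_le : (2 - b/(n:ℝ))^3 ≤ 8 := by nlinarith [mul_nonneg ht0.le (sq_nonneg (b/(n:ℝ) - 3)), ht0]
  -- exp(-b) * n^4 = L^2
  have hexpL : Real.exp L = (n:ℝ) := Real.exp_log hn0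
  have hexpM : Real.exp (Real.log L) = L := Real.exp_log hL0
  have hexp : Real.exp (-b) * (n:ℝ)^4 = L^2 := by
    have hb' : -b = Real.log L + Real.log L + -(L + L + L + L) := by
      rw [hbdef, betaSeq]; ring
    rw [hb', Real.exp_add, Real.exp_add, Real.exp_neg, Real.exp_add, Real.exp_add,
      Real.exp_add, hexpM, hexpL]
    field_simp
  -- last factor bounds
  have hBpos : 0 < 2 + (2*(n:ℝ) - 1) * b / (n:ℝ) + b^2 := by
    have : 0 < (2*(n:ℝ) - 1) * b / (n:ℝ) := div_pos (by nlinarith) hn0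
    nlinarith
  have hBle : 2 + (2*(n:ℝ) - 1) * b / (n:ℝ) + b^2 ≤ b^2 + 2*b + 2 := by
    have h1 : (2*(n:ℝ) - 1) * b / (n:ℝ) ≤ 2*b := by
      rw [div_le_iff₀ hn0]; nlinarith
    linarith
  have hb4 : (0:ℝ) < b^4 := by positivity
  have hTfn : Tfn b n = L^2 / b^4 * (2 - b/(n:ℝ))^3 * (2 + (2*(n:ℝ) - 1) * b / (n:ℝ) + b^2) := by
    rw [Tfn]
    rw [show Real.exp (-b) * (n:ℝ)^4 / b^4 = (Real.exp (-b) * (n:ℝ)^4) / b^4 by ring, hexp]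
  constructor
  · rw [hTfn]
    have : 0 < L^2 / b^4 := by positivity
    exact mul_pos (mul_pos this hcube_pos) hBpos
  · rw [hTfn]
    have hkey : 8*L^2*(b^2+2*b+2) < b^4 := key_poly L b hL hb_lb
    rw [div_mul_eq_mul_div, div_mul_eq_mul_div, div_lt_one hb4]
    calc L^2 * (2 - b/(n:ℝ))^3 * (2 + (2*(n:ℝ) - 1) * b / (n:ℝ) + b^2)
        ≤ L^2 * 8 * (b^2 + 2*b + 2) := by
          apply mul_le_mul
          · apply mul_le_mul_of_nonneg_left hcube_le (by positivity)
          · exact hBle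
          · linarith
          · positivity
      _ < b^4 := by linarith
end
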